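/- With the setup of the previous context (nonempty finite A, P, Q < 1, τ = (1−P)/(1−Q), r_i > 1, λ > 0, C = (1−Q) + ∑_{i∈A} q_i·r_i^(1/(λ+1))), one has τ·C^(λ+1) < 1. -/

import Mathlib

open Finset

theorem limit_risk_strictly_below_one (ι : Type*) (A : Finset ι) (hA : A.Nonempty)
    (p q r : ι → ℝ) (hp : ∀ i ∈ A, 0 < p i) (hq : ∀ i ∈ A, 0 < q i)
    (hP : ∑ i ∈ A, p i < 1) (hQ : ∑ i ∈ A, q i < 1)
    (τ : ℝ) (hτ : τ = (1 - ∑ i ∈ A, p i) / (1 - ∑ i ∈ A, q i))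
    (hr : ∀ i ∈ A, r i = (p i / q i) / τ) (hr1 : ∀ i ∈ A, 1 < r i)
    (lam : ℝ) (hlam : 0 < lam) :
    τ * ((1 - ∑ i ∈ A, q i) + ∑ i ∈ A, q i * (r i) ^ (1 / (lam + 1))) ^ (lam + 1) < 1 := by
  classical
  have hQ0 : (0:ℝ) < 1 - ∑ i ∈ A, q i := by linarith
  have hP0 : (0:ℝ) < 1 - ∑ i ∈ A, p i := by linarith
  have hτ0 : 0 < τ := by rw [hτ]; positivity
  have hl1 : (1:ℝ) < lam + 1 := by linarith
  have hl0 : (0:ℝ) < lam + 1 := by linarith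
  -- index set with an extra point
  set t : Finset (Option ι) := insert none (A.image some) with ht
  have hnone : none ∉ A.image some := by simp
  set w : Option ι → ℝ := fun o => o.elim (1 - ∑ i ∈ A, q i) q with hw
  set z : Option ι → ℝ := fun o => o.elim 1 (fun i => (r i) ^ (1 / (lam + 1))) with hz
  have hsum_image : ∀ f : Option ι → ℝ,
      ∑ o ∈ A.image some, f o = ∑ i ∈ A, f (some i) := by
    intro f
    exact Finset.sum_image (by intro a _ b _ h; exact Option.some_injective _ h)
  have hw0 : ∀ o ∈ t, 0 < w o := by
    intro o ho
    rw [ht, Finset.mem_insert] at ho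
    rcases ho with h | h
    · simpa [h, hw] using hQ0
    · obtain ⟨i, hi, rfl⟩ := Finset.mem_image.mp h
      simpa [hw] using hq i hi
  have hw1 : ∑ o ∈ t, w o = 1 := by
    rw [ht, Finset.sum_insert hnone, hsum_image]
    simp [hw]
  have hmem : ∀ o ∈ t, z o ∈ Set.Ici (0:ℝ) := by
    intro o ho
    rw [ht, Finset.mem_insert] at ho
    rcases ho with h | h
    · simp [h, hz]
    · obtain ⟨i, hi, rfl⟩ := Finset.mem_image.mp h
      simp only [hz, Option.elim]
      exact Set.mem_Ici.mpr (Real.rpow_nonneg (by linarith [hr1 i hi]) _)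
  obtain ⟨i0, hi0⟩ := hA
  have hzi0 : 1 < (r i0) ^ (1 / (lam + 1)) :=
    Real.one_lt_rpow_iff_of_pos (by linarith [hr1 i0 hi0]) |>.mpr
      (Or.inl ⟨hr1 i0 hi0, by positivity⟩)
  have hne : ∃ j ∈ t, ∃ k ∈ t, z j ≠ z k := by
    refine ⟨none, by simp [ht], some i0, ?_, ?_⟩
    · rw [ht]; exact Finset.mem_insert_of_mem (Finset.mem_image_of_mem _ hi0)
    · simp only [hz, Option.elim]; exact ne_of_lt hzi0
  have hjensen := (strictConvexOn_rpow hl1).map_sum_lt hw0 hw1 hmem hne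
  -- compute both sides
  have hLHS : ∑ o ∈ t, w o • z o
      = (1 - ∑ i ∈ A, q i) + ∑ i ∈ A, q i * (r i) ^ (1 / (lam + 1)) := by
    rw [ht, Finset.sum_insert hnone, hsum_image]
    simp [hw, hz]
  have hzr : ∀ i ∈ A, ((r i) ^ (1 / (lam + 1))) ^ (lam + 1) = r i := by
    intro i hi
    rw [← Real.rpow_mul (by linarith [hr1 i hi]), one_div,
      inv_mul_cancel₀ (ne_of_gt hl0), Real.rpow_one]
  have hRHS : ∑ o ∈ t, w o • (z o) ^ (lam + 1) = 1 / τ := by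
    rw [ht, Finset.sum_insert hnone, hsum_image]
    have : ∑ i ∈ A, w (some i) • (z (some i)) ^ (lam + 1)
        = ∑ i ∈ A, q i * r i := by
      apply Finset.sum_congr rfl
      intro i hi
      simp only [hw, hz, Option.elim, smul_eq_mul]
      rw [hzr i hi]
    rw [this]
    have hqr : ∑ i ∈ A, q i * r i = (∑ i ∈ A, p i) / τ := by
      rw [Finset.sum_div]
      apply Finset.sum_congr rfl
      intro i hi
      rw [hr i hi]
      field_simp [(hq i hi).ne']
    have : (1:ℝ) / τ = (1 - ∑ i ∈ A, q i) + (∑ i ∈ A, p i) / τ := by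
      rw [hτ]
      field_simp
      ring
    rw [hqr, this]
    simp [hw, hz, Real.one_rpow]
  rw [hLHS, hRHS] at hjensen
  calc τ * ((1 - ∑ i ∈ A, q i) + ∑ i ∈ A, q i * (r i) ^ (1 / (lam + 1))) ^ (lam + 1)
      < τ * (1 / τ) := by exact mul_lt_mul_of_pos_left hjensen hτ0
    _ = 1 := by field_simp
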